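/- The 1-limited propagating tabled 0L system G over {a,b,c,d,e} with axiom e, table P₁ = {a→a, b→c, c→c, d→d, e→ab^m d} and table P₂ = {a→aa, b→b, c→c, d→dd, e→e}, where in each step exactly one occurrence of each distinct letter present is rewritten using rules from a single chosen table, generates exactly the language L_m = {e} ∪ {aⁿ w dⁿ | n ≥ 1, w ∈ {b,c}^m}. -/

import Mathlib

/-- One k-limited derivation step: for each letter x, exactly min(k, |v|_x) occurrences
of x in v are rewritten, each by some rule of R with left side x; the remaining
occurrences stay unchanged. -/
def klStep {V : Type*} [DecidableEq V] (k : ℕ) (R : Set (V × List V)) (v w : List V) : Prop :=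
  ∃ (S : Finset (Fin v.length)) (f : Fin v.length → List V),
    (∀ x : V, (S.filter (fun i => v.get i = x)).card = min k (v.count x)) ∧
    (∀ i ∈ S, (v.get i, f i) ∈ R) ∧
    (∀ i, i ∉ S → f i = [v.get i]) ∧
    w = (List.ofFn f).flatten

/-- Deterministic k-limited step with rule function P. -/
def detStep {V : Type*} [DecidableEq V] (k : ℕ) (P : V → List V) : List V → List V → Prop :=
  klStep k {p | p.2 = P p.1}

/-- The language generated from axiom ω by a step relation. -/
def lang {V : Type*} (step : List V → List V → Prop) (ω : List V) : Set (List V) :=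
  {w | Relation.ReflTransGen step ω w}

inductive V5 : Type
  | a | b | c | d | e
deriving DecidableEq

open V5

/-- L_m = {e} ∪ {aⁿ w dⁿ | n ≥ 1, w ∈ {b,c}^m}. -/
def Lm (m : ℕ) : Set (List V5) :=
  {[e]} ∪ {z | ∃ n ≥ 1, ∃ w : List V5,
    w.length = m ∧ (∀ x ∈ w, x = b ∨ x = c) ∧
    z = List.replicate n a ++ w ++ List.replicate n d}

/-- Table P₁ = {a→a, b→c, c→c, d→d, e→a b^m d}. -/
def P1 (m : ℕ) : V5 → List V5
  | a => [a] | b => [c] | c => [c] | d => [d]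
  | e => [a] ++ List.replicate m b ++ [d]

/-- Table P₂ = {a→aa, b→b, c→c, d→dd, e→e}. -/
def P2 : V5 → List V5
  | a => [a, a] | b => [b] | c => [c] | d => [d, d] | e => [e]

namespace Stmt7Aux
open List

instance : Fintype V5 :=
  ⟨⟨[V5.a, V5.b, V5.c, V5.d, V5.e], by decide⟩, by intro x; cases x <;> decide⟩

open V5

lemma V5.sum_univ (F : V5 → ℕ) :
    ∑ y : V5, F y = F a + F b + F c + F d + F e := by
  show (Multiset.map F (Quot.mk _ [a,b,c,d,e])).sum = _
  simp [Multiset.sum_coe]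
  ring

lemma countP_ofFn {α : Type*} (p : α → Bool) : ∀ {n : ℕ} (g : Fin n → α),
    (List.ofFn g).countP p = (Finset.univ.filter fun i => p (g i)).card := by
  intro n
  induction n with
  | zero => intro g; simp
  | succ n ih =>
    intro g
    rw [List.ofFn_succ, List.countP_cons, ih]
    rw [Finset.card_filter, Finset.card_filter, Fin.sum_univ_succ]
    omega

lemma count_ofFn {α : Type*} [DecidableEq α] {n : ℕ} (g : Fin n → α) (x : α) :
    (List.ofFn g).count x = (Finset.univ.filter fun i => g i = x).card := by
  rw [List.count, countP_ofFn]
  congr 1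
  ext i
  simp

lemma count_get (v : List V5) (x : V5) :
    v.count x = (Finset.univ.filter fun i => v.get i = x).card := by
  conv_lhs => rw [← List.ofFn_get v]
  rw [count_ofFn]

lemma count_flatten_ofFn {n : ℕ} (f : Fin n → List V5) (x : V5) :
    ((List.ofFn f).flatten).count x = ∑ i : Fin n, (f i).count x := by
  rw [List.count_flatten, List.map_ofFn, List.sum_ofFn]; rfl

end Stmt7Aux
namespace Stmt7Aux
open List V5

lemma count_detStep {P : V5 → List V5} {v w : List V5} (h : detStep 1 P v w) (x : V5) :
    w.count x = v.count x - min 1 (v.count x)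
      + ∑ y : V5, min 1 (v.count y) * (P y).count x := by
  obtain ⟨S, f, hcard, hS, hnS, rfl⟩ := h
  rw [count_flatten_ofFn]
  rw [← Finset.sum_add_sum_compl S (fun i => (f i).count x)]
  have h1 : ∑ i ∈ S, (f i).count x = ∑ y : V5, min 1 (v.count y) * (P y).count x := by
    rw [← Finset.sum_fiberwise S (fun i => v.get i) (fun i => (f i).count x)]
    refine Finset.sum_congr rfl fun y _ => ?_
    rw [Finset.sum_congr rfl (g := fun _ => (P y).count x) (fun i hi => ?_),
      Finset.sum_const, hcard y, smul_eq_mul]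
    · simp only [Finset.mem_filter] at hi
      have := hS i hi.1
      simp only [Set.mem_setOf_eq] at this
      rw [this, hi.2]
  have h2 : ∑ i ∈ Sᶜ, (f i).count x = v.count x - min 1 (v.count x) := by
    have : ∀ i ∈ Sᶜ, (f i).count x = if v.get i = x then 1 else 0 := by
      intro i hi
      rw [hnS i (Finset.mem_compl.mp hi)]
      by_cases hx : v[(i:ℕ)] = x <;>
        simp [List.get_eq_getElem, hx, List.count_cons, List.count_nil]
    rw [Finset.sum_congr rfl this, ← Finset.card_filter]
    have hsplit : (Finset.filter (fun i => v.get i = x) Sᶜ)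
        = Finset.filter (fun i => v.get i = x) Finset.univ \ Finset.filter (fun i => v.get i = x) S := by
      ext i
      simp [Finset.mem_filter, Finset.mem_sdiff]
      tauto
    rw [hsplit, Finset.card_sdiff_of_subset (Finset.filter_subset_filter _ (Finset.subset_univ S)),
      hcard x, ← count_get]
  rw [h1, h2]; omega
end Stmt7Aux
namespace Stmt7Aux
open List V5

/-- From a Forall₂ along an append, split the right list. -/
lemma forall₂_append_split {α β : Type*} {R : α → β → Prop} :
    ∀ {l₁ l₂ : List α} {F : List β}, Forall₂ R (l₁ ++ l₂) F →
      ∃ F₁ F₂, F = F₁ ++ F₂ ∧ Forall₂ R l₁ F₁ ∧ Forall₂ R l₂ F₂ := by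
  intro l₁
  induction l₁ with
  | nil => intro l₂ F h; exact ⟨[], F, rfl, List.Forall₂.nil, h⟩
  | cons x t ih =>
    intro l₂ F h
    cases h with
    | cons hr ht =>
      obtain ⟨F₁, F₂, rfl, h1, h2⟩ := ih ht
      exact ⟨_ :: F₁, F₂, rfl, List.Forall₂.cons hr h1, h2⟩

lemma mem_of_forall₂ {α β : Type*} {R : α → β → Prop} :
    ∀ {l₁ : List α} {l₂ : List β}, Forall₂ R l₁ l₂ → ∀ y ∈ l₂, ∃ x ∈ l₁, R x y := by
  intro l₁ l₂ h
  induction h with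
  | nil => simp
  | @cons x b t₁ t₂ hr ht ih =>
    intro y hy
    rcases List.mem_cons.mp hy with rfl | hy
    · exact ⟨x, List.mem_cons_self, hr⟩
    · obtain ⟨x', hx', hr'⟩ := ih y hy
      exact ⟨x', List.mem_cons_of_mem _ hx', hr'⟩

def Q (P : V5 → List V5) (x : V5) (l : List V5) : Prop :=
  l = [x] ∨ l = P x

lemma shape_detStep {P : V5 → List V5}
    (hPa : ∀ y ∈ P a, y = a) (hPd : ∀ y ∈ P d, y = d)
    (hPb : ∀ y ∈ P b, y = b ∨ y = c) (hPc : ∀ y ∈ P c, y = b ∨ y = c)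
    {n : ℕ} {w v' : List V5}
    (hw : ∀ x ∈ w, x = b ∨ x = c)
    (h : detStep 1 P (List.replicate n a ++ w ++ List.replicate n d) v') :
    ∃ n₁ n₂ w₁, (∀ x ∈ w₁, x = b ∨ x = c) ∧
      v' = List.replicate n₁ a ++ w₁ ++ List.replicate n₂ d := by
  obtain ⟨S, f, hcard, hS, hnS, rfl⟩ := h
  have hQ : ∀ i, Q P ((List.replicate n a ++ w ++ List.replicate n d).get i) (f i) := by
    intro i
    by_cases hi : i ∈ S
    · exact Or.inr (hS i hi)
    · exact Or.inl (hnS i hi)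
  have hF : Forall₂ (Q P) (List.replicate n a ++ w ++ List.replicate n d) (List.ofFn f) := by
    rw [List.forall₂_iff_get]
    refine ⟨by simp, fun i h₁ h₂ => ?_⟩
    have := hQ ⟨i, h₁⟩
    simpa [List.get_ofFn] using this
  obtain ⟨F₁₂, F₃, hsplit, h12, h3⟩ := forall₂_append_split hF
  obtain ⟨F₁, F₂, hsplit2, h1, h2⟩ := forall₂_append_split h12
  subst hsplit2
  have key : ∀ (z : V5) (hz : z = a ∨ z = b ∨ z = c ∨ z = d)
      (s : List V5) (F : List (List V5)), Forall₂ (Q P) s F → True := fun _ _ _ _ _ => trivial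
  -- elements of flatten F₁ are all a
  have ha1 : ∀ y ∈ F₁.flatten, y = a := by
    intro y hy
    obtain ⟨l, hl, hyl⟩ := List.mem_flatten.mp hy
    obtain ⟨x, hx, hQx⟩ := mem_of_forall₂ h1 l hl
    have hxa : x = a := List.eq_of_mem_replicate hx
    subst hxa
    rcases hQx with rfl | rfl
    · simpa using hyl
    · exact hPa y hyl
  have hbc : ∀ y ∈ F₂.flatten, y = b ∨ y = c := by
    intro y hy
    obtain ⟨l, hl, hyl⟩ := List.mem_flatten.mp hy
    obtain ⟨x, hx, hQx⟩ := mem_of_forall₂ h2 l hl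
    rcases hw x hx with rfl | rfl
    · rcases hQx with rfl | rfl
      · left; simpa using hyl
      · exact hPb y hyl
    · rcases hQx with rfl | rfl
      · right; simpa using hyl
      · exact hPc y hyl
  have hd3 : ∀ y ∈ F₃.flatten, y = d := by
    intro y hy
    obtain ⟨l, hl, hyl⟩ := List.mem_flatten.mp hy
    obtain ⟨x, hx, hQx⟩ := mem_of_forall₂ h3 l hl
    have hxd : x = d := List.eq_of_mem_replicate hx
    subst hxd
    rcases hQx with rfl | rfl
    · simpa using hyl
    · exact hPd y hyl
  refine ⟨F₁.flatten.length, F₃.flatten.length, F₂.flatten, hbc, ?_⟩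
  rw [hsplit]
  rw [List.flatten_append, List.flatten_append]
  conv_lhs => rw [List.eq_replicate_iff.mpr ⟨rfl, ha1⟩, List.eq_replicate_iff.mpr ⟨rfl, hd3⟩]

end Stmt7Aux
namespace Stmt7Aux
open List V5

lemma detStep_e {P : V5 → List V5} {v : List V5} (h : detStep 1 P [e] v) : v = P e := by
  obtain ⟨S, f, hcard, hS, hnS, rfl⟩ := h
  have hget : ∀ i : Fin ([e] : List V5).length, ([e] : List V5).get i = e := by
    intro i
    have hi := i.2
    simp only [List.length_singleton] at hi
    have : i = ⟨0, by simp⟩ := by apply Fin.ext; simp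
    rw [this]; rfl
  have hScard : S.card = 1 := by
    have := hcard e
    rw [Finset.filter_true_of_mem (fun i _ => hget i)] at this
    simpa using this
  have h0 : (⟨0, by simp⟩ : Fin ([e] : List V5).length) ∈ S := by
    obtain ⟨i, hi⟩ := Finset.card_pos.mp (by omega : 0 < S.card)
    have hi2 := i.2
    simp only [List.length_singleton] at hi2
    have : i = ⟨0, by simp⟩ := by apply Fin.ext; simp
    rwa [← this]
  have hf0 : f ⟨0, by simp⟩ = P e := by
    have := hS _ h0
    simpa [hget] using this
  have : (List.ofFn f) = [f ⟨0, by simp⟩] := by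
    rw [List.ofFn_succ]
    simp
  rw [this, hf0]
  simp

lemma count_bc {w : List V5} (hw : ∀ x ∈ w, x = b ∨ x = c) :
    w.count a = 0 ∧ w.count d = 0 ∧ w.count e = 0 ∧ w.length = w.count b + w.count c := by
  induction w with
  | nil => simp
  | cons x t ih =>
    have hx := hw x (List.mem_cons_self)
    have ht := ih (fun y hy => hw y (List.mem_cons_of_mem _ hy))
    rcases hx with rfl | rfl <;> simp [List.count_cons] <;> omega

lemma step_preserves {m : ℕ} (hm : 1 ≤ m) {u v : List V5} (hu : u ∈ Lm m)
    (h : detStep 1 (P1 m) u v ∨ detStep 1 P2 u v) : v ∈ Lm m := by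
  simp only [Lm, Set.mem_union, Set.mem_singleton_iff, Set.mem_setOf_eq] at hu ⊢
  rcases hu with rfl | ⟨n, hn, w, hwl, hw, rfl⟩
  · rcases h with h | h
    · have hv := detStep_e h
      subst hv
      refine Or.inr ⟨1, le_refl 1, List.replicate m b, by simp, ?_, ?_⟩
      · intro x hx; exact Or.inl (List.eq_of_mem_replicate hx)
      · simp [P1]
    · exact Or.inl (detStep_e h)
  · obtain ⟨h0a, h0d, h0e, h0len⟩ := count_bc hw
    have hua : (List.replicate n a ++ w ++ List.replicate n d).count a = n := by
      simp [List.count_append, List.count_replicate, h0a]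
    have hub : (List.replicate n a ++ w ++ List.replicate n d).count b = w.count b := by
      simp [List.count_append, List.count_replicate]
    have huc : (List.replicate n a ++ w ++ List.replicate n d).count c = w.count c := by
      simp [List.count_append, List.count_replicate]
    have hud : (List.replicate n a ++ w ++ List.replicate n d).count d = n := by
      simp [List.count_append, List.count_replicate, h0d]
    have hue : (List.replicate n a ++ w ++ List.replicate n d).count e = 0 := by
      simp [List.count_append, List.count_replicate, h0e]
    rcases h with h | h
    · obtain ⟨n₁, n₂, w₁, hbc₁, hv⟩ := shape_detStep
        (by intro y hy; simp [P1] at hy; simp [hy])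
        (by intro y hy; simp [P1] at hy; simp [hy])
        (by intro y hy; simp [P1] at hy; simp [hy])
        (by intro y hy; simp [P1] at hy; simp [hy]) hw h
      obtain ⟨g0a, g0d, g0e, g0len⟩ := count_bc hbc₁
      have ea := count_detStep h a
      have eb := count_detStep h b
      have ec := count_detStep h c
      rw [V5.sum_univ] at ea eb ec
      simp only [P1, hua, hub, huc, hud, hue, hv, List.count_append,
        List.count_replicate, List.count_cons, List.count_nil] at ea eb ec
      simp at ea eb ec
      have ed := count_detStep h d
      rw [V5.sum_univ] at ed
      simp only [P1, hua, hub, huc, hud, hue, hv, List.count_append,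
        List.count_replicate, List.count_cons, List.count_nil] at ed
      simp at ed
      have hlen : w₁.length = m := by omega
      refine Or.inr ⟨n, hn, w₁, hlen, hbc₁, ?_⟩
      rw [hv, (by omega : n₁ = n), (by omega : n₂ = n)]
    · obtain ⟨n₁, n₂, w₁, hbc₁, hv⟩ := shape_detStep
        (by intro y hy; simp [P2] at hy; simp [hy])
        (by intro y hy; simp [P2] at hy; simp [hy])
        (by intro y hy; simp [P2] at hy; simp [hy])
        (by intro y hy; simp [P2] at hy; simp [hy]) hw h
      obtain ⟨g0a, g0d, g0e, g0len⟩ := count_bc hbc₁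
      have ea := count_detStep h a
      have eb := count_detStep h b
      have ec := count_detStep h c
      have ed := count_detStep h d
      rw [V5.sum_univ] at ea eb ec ed
      simp only [P2, hua, hub, huc, hud, hue, hv, List.count_append,
        List.count_replicate, List.count_cons, List.count_nil] at ea eb ec ed
      simp at ea eb ec ed
      have hlen : w₁.length = m := by omega
      refine Or.inr ⟨n + 1, by omega, w₁, hlen, hbc₁, ?_⟩
      rw [hv, (by omega : n₁ = n + 1), (by omega : n₂ = n + 1)]
end Stmt7Aux
namespace Stmt7Aux
open List V5

lemma zip_eq_ofFn {α β : Type*} (l₁ : List α) (l₂ : List β) (h : l₁.length = l₂.length) :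
    l₁.zip l₂ = List.ofFn (fun i : Fin l₁.length => (l₁.get i, l₂.get (Fin.cast h i))) := by
  apply List.ext_getElem
  · simp [h]
  · intro i h1 h2
    simp [List.getElem_zip, List.getElem_ofFn]

lemma step_of_spec {P : V5 → List V5} {v : List V5} {M : List (Bool × List V5)}
    (hrel : List.Forall₂ (fun x p => p.2 = if p.1 then P x else [x]) v M)
    (hcard : ∀ x : V5,
      (v.zip M).countP (fun q => decide (q.1 = x) && q.2.1) = min 1 (v.count x)) :
    detStep 1 P v ((M.map Prod.snd).flatten) := by
  have hlen : v.length = M.length := hrel.length_eq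
  have hrel' := (List.forall₂_iff_get.mp hrel).2
  refine ⟨Finset.univ.filter (fun i : Fin v.length => (M.get (Fin.cast hlen i)).1),
    fun i => (M.get (Fin.cast hlen i)).2, ?_, ?_, ?_, ?_⟩
  · intro x
    rw [Finset.filter_filter]
    rw [← hcard x, zip_eq_ofFn v M hlen, countP_ofFn]
    congr 1
    ext i
    simp only [Finset.mem_filter, Finset.mem_univ, true_and, Bool.and_eq_true,
      decide_eq_true_eq]
    tauto
  · intro i hi
    simp only [Finset.mem_filter, Finset.mem_univ, true_and] at hi
    have := hrel' i.1 i.2 (by omega)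
    show (M.get (Fin.cast hlen i)).2 = P (v.get i)
    have heq : M.get ⟨i.1, by omega⟩ = M.get (Fin.cast hlen i) := rfl
    rw [heq] at this
    have hv : v.get ⟨i.1, i.2⟩ = v.get i := rfl
    rw [hv] at this
    rw [this, if_pos hi]
  · intro i hi
    simp only [Finset.mem_filter, Finset.mem_univ, true_and] at hi
    have := hrel' i.1 i.2 (by omega)
    have heq : M.get ⟨i.1, by omega⟩ = M.get (Fin.cast hlen i) := rfl
    rw [heq] at this
    have hv : v.get ⟨i.1, i.2⟩ = v.get i := rfl
    rw [hv] at this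
    show (M.get (Fin.cast hlen i)).2 = [v.get i]
    rw [this, if_neg hi]
  · congr 1
    apply List.ext_getElem
    · simp [hlen]
    · intro i h1 h2
      simp [List.getElem_map, List.getElem_ofFn]

end Stmt7Aux
namespace Stmt7Aux
open List V5

def mk (P : V5 → List V5) : Finset V5 → List V5 → List (Bool × List V5)
  | _, [] => []
  | s, x :: t => if x ∈ s then (false, [x]) :: mk P s t
                 else (true, P x) :: mk P (insert x s) t

lemma mk_rel (P : V5 → List V5) : ∀ (v : List V5) (s : Finset V5),
    List.Forall₂ (fun x p => p.2 = if p.1 then P x else [x]) v (mk P s v) := by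
  intro v
  induction v with
  | nil => intro s; exact List.Forall₂.nil
  | cons x t ih =>
    intro s
    by_cases hx : x ∈ s <;> simp only [mk, if_pos, if_neg, hx, if_true, if_false]
    · exact List.Forall₂.cons (by simp) (ih s)
    · exact List.Forall₂.cons (by simp) (ih (insert x s))

lemma mk_countP (P : V5 → List V5) (x : V5) : ∀ (v : List V5) (s : Finset V5),
    ((v.zip (mk P s v)).countP fun q => decide (q.1 = x) && q.2.1)
      = if x ∈ s then 0 else min 1 (v.count x) := by
  intro v
  induction v with
  | nil => intro s; simp [mk]
  | cons y t ih =>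
    intro s
    by_cases hy : y ∈ s <;>
      simp only [mk, hy, if_true, if_false, List.zip_cons_cons, List.countP_cons, ih]
    · by_cases hxy : x = y
      · subst hxy
        simp [hy, List.count_cons]
      · by_cases hxs : x ∈ s <;> simp [hxs, List.count_cons, hxy, Ne.symm hxy]
    · by_cases hxy : x = y
      · subst hxy
        simp [hy, List.count_cons]
      · simp only [Finset.mem_insert, hxy, false_or]
        have hyx : ¬y = x := fun h => hxy h.symm
        by_cases hxs : x ∈ s <;> simp [hxs, List.count_cons, hxy, hyx]

lemma mk_snd (P : V5 → List V5) : ∀ (v : List V5) (s : Finset V5),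
    (∀ y ∈ v, y ∈ s ∨ P y = [y]) → (mk P s v).map Prod.snd = v.map (fun x => [x]) := by
  intro v
  induction v with
  | nil => intro s _; simp [mk]
  | cons y t ih =>
    intro s hy
    by_cases hys : y ∈ s <;> simp only [mk, hys, if_true, if_false, List.map_cons]
    · rw [ih s (fun z hz => hy z (List.mem_cons_of_mem _ hz))]
    · rcases hy y (List.mem_cons_self) with h | h
      · exact absurd h hys
      · rw [h, ih (insert y s) (fun z hz => by
          rcases hy z (List.mem_cons_of_mem _ hz) with h' | h'
          · exact Or.inl (Finset.mem_insert_of_mem h')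
          · exact Or.inr h')]

lemma flatten_map_singleton {α : Type*} (v : List α) :
    (v.map fun x => [x]).flatten = v := by
  induction v with
  | nil => rfl
  | cons x t ih => simp [ih]

/-- Forall₂ is preserved by appending. -/
lemma forall₂_append {α β : Type*} {R : α → β → Prop} {l₁ l₂ : List α} {F₁ F₂ : List β}
    (h1 : List.Forall₂ R l₁ F₁) (h2 : List.Forall₂ R l₂ F₂) :
    List.Forall₂ R (l₁ ++ l₂) (F₁ ++ F₂) := by
  induction h1 with
  | nil => exact h2
  | cons hr _ ih => exact List.Forall₂.cons hr ih

end Stmt7Aux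
namespace Stmt7Aux
open List V5

lemma flatten_replicate_singleton {α : Type*} (x : α) :
    ∀ k, (List.replicate k [x]).flatten = List.replicate k x := by
  intro k
  induction k with
  | zero => rfl
  | succ k ih => simp [List.replicate_succ, ih]

lemma forall₂_replicate {α β : Type*} {R : α → β → Prop} {x : α} {y : β} (h : R x y) :
    ∀ k, List.Forall₂ R (List.replicate k x) (List.replicate k y) := by
  intro k
  induction k with
  | zero => exact List.Forall₂.nil
  | succ k ih => simpa [List.replicate_succ] using List.Forall₂.cons h ih

lemma mk_length (P : V5 → List V5) (s : Finset V5) (v : List V5) :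
    (mk P s v).length = v.length := ((mk_rel P v s).length_eq).symm

lemma countP_zip_replicate {α β : Type*} (p : α × β → Bool) (x : α) (q : β) :
    ∀ k, ((List.replicate k x).zip (List.replicate k q)).countP p
      = if p (x, q) then k else 0 := by
  intro k
  induction k with
  | zero => simp
  | succ k ih =>
    simp only [List.replicate_succ, List.zip_cons_cons, List.countP_cons, ih]
    by_cases h : p (x, q) <;> simp [h]

/-- Step from the axiom. -/
lemma stepA (P : V5 → List V5) : detStep 1 P [e] (P e) := by
  have h := step_of_spec (P := P) (v := [e]) (M := [(true, P e)])
    (List.Forall₂.cons (by simp) List.Forall₂.nil) (by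
      intro x
      cases x <;> simp [List.count_cons])
  simpa using h

/-- P2 step: pump the a's and d's. -/
lemma stepB (k : ℕ) (w : List V5) (hw : ∀ x ∈ w, x = b ∨ x = c) :
    detStep 1 P2 (List.replicate (k+1) a ++ w ++ List.replicate (k+1) d)
      (List.replicate (k+2) a ++ w ++ List.replicate (k+2) d) := by
  obtain ⟨h0a, h0d, h0e, h0len⟩ := count_bc hw
  have hlen1 : (a :: List.replicate k a).length
      = ((true, ([a,a] : List V5)) :: List.replicate k (false, ([a] : List V5))).length := by
    simp
  have hlen2 : ((a :: List.replicate k a) ++ w).length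
      = (((true, ([a,a] : List V5)) :: List.replicate k (false, ([a] : List V5)))
          ++ mk P2 {a} w).length := by
    simp [mk_length]
  have hrel : List.Forall₂ (fun x p => p.2 = if p.1 then P2 x else [x])
      ((a :: List.replicate k a) ++ w ++ (d :: List.replicate k d))
      (((true, ([a,a] : List V5)) :: List.replicate k (false, [a])) ++ mk P2 {a} w
        ++ ((true, ([d,d] : List V5)) :: List.replicate k (false, [d]))) := by
    refine forall₂_append (forall₂_append ?_ (mk_rel P2 w {a})) ?_
    · exact List.Forall₂.cons (by simp [P2]) (forall₂_replicate (by simp [P2]) k)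
    · exact List.Forall₂.cons (by simp [P2]) (forall₂_replicate (by simp [P2]) k)
  have h := step_of_spec hrel (by
    intro x
    rw [List.zip_append (by simpa using hlen2), List.zip_append hlen1]
    rw [List.countP_append, List.countP_append]
    rw [List.zip_cons_cons, List.zip_cons_cons, List.countP_cons, List.countP_cons]
    rw [countP_zip_replicate, countP_zip_replicate, mk_countP]
    cases x <;> simp [List.count_append, List.count_replicate, List.count_cons,
      h0a, h0d, h0e])
  have hsnd : ((((true, ([a,a] : List V5)) :: List.replicate k (false, [a])) ++ mk P2 {a} w
        ++ ((true, ([d,d] : List V5)) :: List.replicate k (false, [d]))).map Prod.snd).flatten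
      = List.replicate (k+2) a ++ w ++ List.replicate (k+2) d := by
    rw [List.map_append, List.map_append]
    rw [mk_snd P2 w {a} (by
      intro y hy
      rcases hw y hy with rfl | rfl <;> exact Or.inr (by simp [P2]))]
    simp only [List.map_cons, List.map_replicate, List.flatten_append, List.flatten_cons]
    rw [flatten_replicate_singleton, flatten_replicate_singleton, flatten_map_singleton]
    simp [List.replicate_succ]
  rw [hsnd] at h
  have hv : (a :: List.replicate k a) ++ w ++ (d :: List.replicate k d)
      = List.replicate (k+1) a ++ w ++ List.replicate (k+1) d := by
    simp [List.replicate_succ]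
  rw [hv] at h
  exact h

end Stmt7Aux
namespace Stmt7Aux
open List V5

/-- P1 step: rewrite the distinguished b (at an arbitrary position) into c. -/
lemma stepC (m k : ℕ) (u t : List V5) (hu : ∀ x ∈ u, x = b ∨ x = c)
    (ht : ∀ x ∈ t, x = b ∨ x = c) :
    detStep 1 (P1 m) (List.replicate (k+1) a ++ (u ++ b :: t) ++ List.replicate (k+1) d)
      (List.replicate (k+1) a ++ (u ++ c :: t) ++ List.replicate (k+1) d) := by
  set P := P1 m with hP
  obtain ⟨hu0a, hu0d, hu0e, hu0len⟩ := count_bc hu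
  obtain ⟨ht0a, ht0d, ht0e, ht0len⟩ := count_bc ht
  have hbu : V5.b ∉ u.toFinset ∨ True := Or.inr trivial
  have hdu : V5.d ∉ u := fun h => by rcases hu d h with h | h <;> simp at h
  have hdt : V5.d ∉ t := fun h => by rcases ht d h with h | h <;> simp at h
  have heu : V5.e ∉ u := fun h => by rcases hu e h with h | h <;> simp at h
  have het : V5.e ∉ t := fun h => by rcases ht e h with h | h <;> simp at h
  set M1 := mk P {b} (List.replicate (k+1) a) with hM1
  set M2 := mk P {b, a} u with hM2
  set M3 := mk P (({a, b} : Finset V5) ∪ u.toFinset) t with hM3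
  set M4 := mk P (({a, b} : Finset V5) ∪ u.toFinset ∪ t.toFinset) (List.replicate (k+1) d)
    with hM4
  have hl1 : (List.replicate (k+1) a).length = M1.length := by simp [hM1, mk_length]
  have hl2 : u.length = M2.length := by simp [hM2, mk_length]
  have hlmid : (u ++ b :: t).length = (M2 ++ (true, ([c] : List V5)) :: M3).length := by
    simp [hM2, hM3, mk_length]
  have hl12 : (List.replicate (k+1) a ++ (u ++ b :: t)).length
      = (M1 ++ (M2 ++ (true, ([c] : List V5)) :: M3)).length := by
    simp [hM1, hM2, hM3, mk_length]
  have hrel : List.Forall₂ (fun x p => p.2 = if p.1 then P x else [x])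
      (List.replicate (k+1) a ++ (u ++ b :: t) ++ List.replicate (k+1) d)
      ((M1 ++ (M2 ++ (true, ([c] : List V5)) :: M3)) ++ M4) := by
    refine forall₂_append (forall₂_append (mk_rel P _ _)
      (forall₂_append (mk_rel P _ _) (List.Forall₂.cons (by simp [hP, P1]) (mk_rel P _ _)))) 
      (mk_rel P _ _)
  have h := step_of_spec hrel (by
    intro x
    rw [List.zip_append hl12, List.countP_append,
      List.zip_append hl1, List.countP_append,
      List.zip_append hl2, List.countP_append,
      List.zip_cons_cons, List.countP_cons]
    rw [hM1, hM2, hM3, hM4, mk_countP, mk_countP, mk_countP, mk_countP]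
    have hcv : ∀ z : V5, List.count z
        (List.replicate (k+1) a ++ (u ++ b :: t) ++ List.replicate (k+1) d)
        = List.count z (List.replicate (k+1) a) + (List.count z u
          + (List.count z t + if b = z then 1 else 0)) + List.count z (List.replicate (k+1) d) := by
      intro z
      simp [List.count_append, List.count_cons]
      omega
    rw [hcv]
    cases x
    · simp [List.count_replicate, hu0a, ht0a]
    · simp [List.count_replicate]; omega
    · -- c
      simp only [List.count_replicate, Finset.mem_union, Finset.mem_insert,
        Finset.mem_singleton, List.mem_toFinset]
      by_cases hcu : V5.c ∈ u
      · have : 0 < List.count V5.c u := List.count_pos_iff.mpr hcu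
        simp [hcu]
        omega
      · have : List.count V5.c u = 0 := List.count_eq_zero.mpr hcu
        simp [hcu, this]
    · -- d
      simp only [List.count_replicate, Finset.mem_union, Finset.mem_insert,
        Finset.mem_singleton, List.mem_toFinset]
      simp [hdu, hdt, hu0d, ht0d]
    · simp only [List.count_replicate, Finset.mem_union, Finset.mem_insert,
        Finset.mem_singleton, List.mem_toFinset]
      simp [heu, het, List.count_eq_zero.mpr heu, List.count_eq_zero.mpr het])
  have hsnd : ((((M1 ++ (M2 ++ (true, ([c] : List V5)) :: M3)) ++ M4)).map Prod.snd).flatten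
      = List.replicate (k+1) a ++ (u ++ c :: t) ++ List.replicate (k+1) d := by
    have e1 : M1.map Prod.snd = (List.replicate (k+1) a).map (fun x => [x]) :=
      mk_snd P _ _ (fun y hy => Or.inr (by rw [List.eq_of_mem_replicate hy]; simp [hP, P1]))
    have e2 : M2.map Prod.snd = u.map (fun x => [x]) := by
      refine mk_snd P _ _ (fun y hy => ?_)
      rcases hu y hy with rfl | rfl
      · exact Or.inl (by simp)
      · exact Or.inr (by simp [hP, P1])
    have e3 : M3.map Prod.snd = t.map (fun x => [x]) := by
      refine mk_snd P _ _ (fun y hy => ?_)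
      rcases ht y hy with rfl | rfl
      · exact Or.inl (by simp)
      · exact Or.inr (by simp [hP, P1])
    have e4 : M4.map Prod.snd = (List.replicate (k+1) d).map (fun x => [x]) :=
      mk_snd P _ _ (fun y hy => Or.inr (by rw [List.eq_of_mem_replicate hy]; simp [hP, P1]))
    simp only [List.map_append, List.map_cons, e1, e2, e3, e4, List.flatten_append,
      List.flatten_cons, flatten_map_singleton]
    simp
  rw [hsnd] at h
  exact h

end Stmt7Aux
namespace Stmt7Aux
open List V5

lemma gen_pump (m k : ℕ) :
    Relation.ReflTransGen (fun u v => detStep 1 (P1 m) u v ∨ detStep 1 P2 u v) [e]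
      (List.replicate (k+1) a ++ List.replicate m b ++ List.replicate (k+1) d) := by
  induction k with
  | zero =>
    refine Relation.ReflTransGen.single (Or.inl ?_)
    have h := stepA (P1 m)
    have he : P1 m e = List.replicate 1 a ++ List.replicate m b ++ List.replicate 1 d := by
      simp [P1]
    rwa [he] at h
  | succ k ih =>
    exact ih.tail (Or.inr (stepB k _ (fun x hx => Or.inl (List.eq_of_mem_replicate hx))))

lemma gen_mid (m k : ℕ) : ∀ (w u : List V5), (∀ x ∈ w, x = b ∨ x = c) →
    (∀ x ∈ u, x = b ∨ x = c) →
    Relation.ReflTransGen (fun u v => detStep 1 (P1 m) u v ∨ detStep 1 P2 u v)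
      (List.replicate (k+1) a ++ (u ++ List.replicate w.length b) ++ List.replicate (k+1) d)
      (List.replicate (k+1) a ++ (u ++ w) ++ List.replicate (k+1) d) := by
  intro w
  induction w with
  | nil => intro u _ _; simp; exact Relation.ReflTransGen.refl
  | cons x w' ih =>
    intro u hw hu
    have hw' : ∀ y ∈ w', y = b ∨ y = c := fun y hy => hw y (List.mem_cons_of_mem _ hy)
    have hx := hw x (List.mem_cons_self)
    have hkey : u ++ List.replicate (x :: w').length b
        = (u ++ [b]) ++ List.replicate w'.length b := by
      simp [List.replicate_succ, List.append_assoc]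
    rcases hx with rfl | rfl
    · have h1 := ih (u ++ [b]) hw' (by
        intro y hy
        rcases List.mem_append.mp hy with hy | hy
        · exact hu y hy
        · simp at hy; exact Or.inl hy)
      rw [hkey]
      have h2 : (u ++ [b]) ++ w' = u ++ b :: w' := by simp
      rwa [h2] at h1
    · have hstep := stepC m k u (List.replicate w'.length b) hu
        (fun y hy => Or.inl (List.eq_of_mem_replicate hy))
      have h1 := ih (u ++ [c]) hw' (by
        intro y hy
        rcases List.mem_append.mp hy with hy | hy
        · exact hu y hy
        · simp at hy; exact Or.inr hy)
      refine Relation.ReflTransGen.head (b := List.replicate (k+1) a ++ (u ++ c :: List.replicate w'.length b) ++ List.replicate (k+1) d) (Or.inl ?_) ?_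
      · rw [hkey]
        have : u ++ [b] ++ List.replicate w'.length b = u ++ b :: List.replicate w'.length b := by
          simp
        rw [this]
        exact hstep
      · have h2 : (u ++ [c]) ++ w' = u ++ c :: w' := by simp
        have h3 : u ++ c :: List.replicate w'.length b
            = (u ++ [c]) ++ List.replicate w'.length b := by simp
        rw [h3]
        rwa [h2] at h1

end Stmt7Aux


open Stmt7Aux V5 in
/-- The 1ℓPT0L system with axiom e and tables P₁, P₂ generates exactly L_m. -/
theorem stmt7 (m : ℕ) (hm : 1 ≤ m) :
    lang (fun u v => detStep 1 (P1 m) u v ∨ detStep 1 P2 u v) [e] = Lm m := by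
  apply Set.Subset.antisymm
  · intro z hz
    have hz' : Relation.ReflTransGen
        (fun u v => detStep 1 (P1 m) u v ∨ detStep 1 P2 u v) [e] z := hz
    induction hz' with
    | refl => exact Set.mem_union_left _ rfl
    | tail h1 h2 ih => exact step_preserves hm (ih h1) h2
  · intro z hz
    rcases hz with hz | ⟨n, hn, w, hwl, hw, rfl⟩
    · rw [Set.mem_singleton_iff] at hz
      subst hz
      exact Relation.ReflTransGen.refl
    · obtain ⟨k, rfl⟩ : ∃ k, n = k + 1 := ⟨n - 1, by omega⟩
      have g1 := gen_pump m k
      have g2 := gen_mid m k w [] hw (by simp)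
      simp only [List.nil_append, hwl] at g2
      exact g1.trans g2
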